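/- Every digraph D contains a vertex subset X ⊆ V(D) and a vertex x₀ ∈ X such that D[X] is strongly connected, χ⃗(D[X]) ≥ χ⃗(D)/2, and for every x ∈ X there exists a directed path in D starting at x and ending at x₀ which intersects X exactly in {x, x₀}. -/

import Mathlib

/-- A digraph on vertex type `V` is modeled as an arc relation `A : V → V → Prop`.
`Induce A X` is the arc relation of the induced subdigraph `D[X]`. -/
def Induce {V : Type*} (A : V → V → Prop) (X : Set V) : V → V → Prop :=
  fun u v => u ∈ X ∧ v ∈ X ∧ A u v

/-- `l` is (the vertex list of) a directed cycle: at least 2 vertices, consecutive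
vertices joined by arcs, all vertices distinct, and an arc from the last vertex back
to the first. Its length (number of arcs) is `l.length`. -/
def IsDicycleList {V : Type*} (A : V → V → Prop) (l : List V) : Prop :=
  2 ≤ l.length ∧ l.Chain' A ∧ l.Nodup ∧
    ∃ x y, l.getLast? = some x ∧ l.head? = some y ∧ A x y

/-- The digraph has no directed cycle. -/
def AcyclicRel {V : Type*} (A : V → V → Prop) : Prop :=
  ¬ ∃ l : List V, IsDicycleList A l

/-- The dichromatic number: the least `k` such that the vertices can be colored with
`k` colors so that each color class induces an acyclic subdigraph. -/
noncomputable def dichrom {V : Type*} (A : V → V → Prop) : ℕ :=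
  sInf {k | ∃ f : V → Fin k, ∀ i, AcyclicRel (Induce A {v | f v = i})}

/-- `l` is a directed path from `x` to `y` (possibly of length zero, i.e. `l = [x]`).
Its length (number of arcs) is `l.length - 1`. -/
def IsDipathFromTo {V : Type*} (A : V → V → Prop) (x y : V) (l : List V) : Prop :=
  l.Chain' A ∧ l.Nodup ∧ l.head? = some x ∧ l.getLast? = some y

/-- Directed distance from `x` to `y`: length of a shortest directed path. -/
noncomputable def ddist {V : Type*} (A : V → V → Prop) (x y : V) : ℕ :=
  sInf {n | ∃ l, IsDipathFromTo A x y l ∧ l.length = n + 1}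

/-- The digraph is strongly connected. -/
def StronglyConnectedRel {V : Type*} (A : V → V → Prop) : Prop :=
  ∀ x y : V, ∃ l, IsDipathFromTo A x y l

/-- The induced subdigraph `D[X]` is strongly connected. -/
def StronglyConnectedOn {V : Type*} (A : V → V → Prop) (X : Set V) : Prop :=
  ∀ x ∈ X, ∀ y ∈ X, ∃ l, IsDipathFromTo (Induce A X) x y l

/-- `X` is a strongly connected component: a maximal nonempty set inducing a strongly
connected subdigraph. -/
def IsSCC {V : Type*} (A : V → V → Prop) (X : Set V) : Prop :=
  X.Nonempty ∧ StronglyConnectedOn A X ∧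
    ∀ Y : Set V, X ⊆ Y → StronglyConnectedOn A Y → Y = X

/-- The internal vertices of a path given as a vertex list. -/
def Internal {V : Type*} (l : List V) : List V := l.dropLast.tail

/-- `D = (V, A)` contains a subdivision of `F = (W, B)` in which the subdivision path
of each arc `(u,v)` has length (number of arcs) satisfying the predicate `len u v`:
there are pairwise distinct branch vertices `b w`, and for each arc of `F` a directed
path of positive length between the corresponding branch vertices, these paths being
pairwise internally disjoint and internally avoiding all branch vertices. -/
def IsSubdivisionWith {V W : Type*} (A : V → V → Prop) (B : W → W → Prop)
    (len : W → W → ℕ → Prop) : Prop :=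
  ∃ b : W → V, Function.Injective b ∧
  ∃ P : ∀ u v, B u v → List V,
    (∀ u v (h : B u v), IsDipathFromTo A (b u) (b v) (P u v h) ∧
      2 ≤ (P u v h).length ∧ len u v ((P u v h).length - 1)) ∧
    (∀ u v (h : B u v), ∀ x ∈ Internal (P u v h),
      (∀ w : W, x ≠ b w) ∧
      ∀ u' v' (h' : B u' v'), (u, v) ≠ (u', v') → x ∉ P u' v' h')

section Helpers
variable {V : Type*}

lemma acyclic_of_imp {R S : V → V → Prop} (h : ∀ u v, R u v → S u v)
    (hS : AcyclicRel S) : AcyclicRel R := by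
  rintro ⟨l, hlen, hch, hnd, x, y, hx, hy, hxy⟩
  exact hS ⟨l, hlen, hch.imp h, hnd, x, y, hx, hy, h _ _ hxy⟩

lemma induce_induce {A : V → V → Prop} {X L : Set V} (h : X ⊆ L) :
    Induce (Induce A L) X = Induce A X := by
  funext u v
  simp only [Induce, eq_iff_iff]
  constructor
  · rintro ⟨hu, hv, _, _, ha⟩; exact ⟨hu, hv, ha⟩
  · rintro ⟨hu, hv, ha⟩; exact ⟨hu, hv, h hu, h hv, ha⟩

lemma induce_univ {A : V → V → Prop} : Induce A Set.univ = A := by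
  funext u v
  simp [Induce]

lemma acyclic_of_subsingleton {A : V → V → Prop} {S : Set V}
    (hS : ∀ u v, u ∈ S → v ∈ S → u = v) : AcyclicRel (Induce A S) := by
  rintro ⟨l, hlen, hch, hnd, x, y, hx, hy, hxy⟩
  match l, hlen with
  | a :: b :: t, _ =>
    obtain ⟨ha, hb, -⟩ := (List.isChain_cons_cons.mp (by exact hch)).1
    have : a = b := hS a b ha hb
    simp [this] at hnd

lemma acyclic_induce_of_inner_subsingleton {A : V → V → Prop} {S T : Set V}
    (hS : ∀ u v, u ∈ S → v ∈ S → u = v) : AcyclicRel (Induce (Induce A S) T) := by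
  refine acyclic_of_imp (S := Induce A S) ?_ (acyclic_of_subsingleton hS)
  rintro u v ⟨_, _, h⟩; exact h

lemma dichromSet_nonempty [Fintype V] (A : V → V → Prop) :
    {k | ∃ f : V → Fin k, ∀ i, AcyclicRel (Induce A {v | f v = i})}.Nonempty := by
  classical
  refine ⟨Fintype.card V, Fintype.equivFin V, fun i => acyclic_of_subsingleton ?_⟩
  intro u v hu hv
  have : Fintype.equivFin V u = Fintype.equivFin V v := hu.trans hv.symm
  exact (Fintype.equivFin V).injective this

lemma exists_dichrom_coloring [Fintype V] (A : V → V → Prop) :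
    ∃ f : V → Fin (dichrom A), ∀ i, AcyclicRel (Induce A {v | f v = i}) :=
  Nat.sInf_mem (dichromSet_nonempty A)

lemma dichrom_pos [Fintype V] [Nonempty V] (A : V → V → Prop) : 1 ≤ dichrom A := by
  by_contra h
  push_neg at h
  interval_cases h' : dichrom A
  · obtain ⟨f, -⟩ := exists_dichrom_coloring A
    rw [h'] at f
    exact (f (Classical.arbitrary V)).elim0

lemma dichrom_le_of_coloring {A : V → V → Prop} {k : ℕ} (f : V → Fin k)
    (h : ∀ i, AcyclicRel (Induce A {v | f v = i})) : dichrom A ≤ k :=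
  Nat.sInf_le ⟨f, h⟩

lemma exists_coloring_of_le [Fintype V] {A : V → V → Prop} {k : ℕ} (h : dichrom A ≤ k) :
    ∃ f : V → Fin k, ∀ i, AcyclicRel (Induce A {v | f v = i}) := by
  classical
  obtain ⟨f₀, hf₀⟩ := exists_dichrom_coloring A
  refine ⟨fun v => Fin.castLE h (f₀ v), fun i => ?_⟩
  by_cases hi : ∃ i₀, Fin.castLE h i₀ = i
  · obtain ⟨i₀, rfl⟩ := hi
    have : {v | Fin.castLE h (f₀ v) = Fin.castLE h i₀} = {v | f₀ v = i₀} := by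
      ext v; simp [Fin.castLE_inj]
    rw [this]
    exact hf₀ i₀
  · push_neg at hi
    refine acyclic_of_subsingleton (fun u v hu _ => absurd hu ?_)
    exact hi (f₀ u)

lemma dichrom_le_card_of_coloring [Fintype V] {A : V → V → Prop} {ι : Type*} [Fintype ι]
    (f : V → ι) (h : ∀ i, AcyclicRel (Induce A {v | f v = i})) :
    dichrom A ≤ Fintype.card ι := by
  classical
  let e := Fintype.equivFin ι
  refine dichrom_le_of_coloring (fun v => e (f v)) (fun i => ?_)
  have : {v | e (f v) = i} = {v | f v = e.symm i} := by
    ext v; simp [Equiv.apply_eq_iff_eq_symm_apply]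
  rw [this]
  exact h _

lemma dichrom_empty_le [Fintype V] {A : V → V → Prop} {S : Set V} (hS : S = ∅) :
    dichrom (Induce A S) ≤ 1 := by
  refine dichrom_le_of_coloring (fun _ => 0) (fun i => ?_)
  exact acyclic_induce_of_inner_subsingleton (fun u v hu _ => by simp [hS] at hu)

end Helpers
section Walks
variable {V : Type*} {R : V → V → Prop}

open Relation

lemma cons_of_head? {l : List V} {x : V} (h : l.head? = some x) : ∃ t, l = x :: t := by
  cases l with
  | nil => simp at h
  | cons a t => simp at h; exact ⟨t, by rw [h]⟩

lemma getLast?_cons_ne {a : V} {l : List V} (h : l ≠ []) :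
    (a :: l).getLast? = l.getLast? := by
  cases l with
  | nil => exact absurd rfl h
  | cons b t => exact List.getLast?_cons_cons

def IsWalk (R : V → V → Prop) (x y : V) (l : List V) : Prop :=
  l.Chain' R ∧ l.head? = some x ∧ l.getLast? = some y

lemma isWalk_singleton (x : V) : IsWalk R x x [x] :=
  ⟨List.isChain_singleton x, rfl, rfl⟩

lemma exists_walk_of_reflTransGen {x y : V} (h : ReflTransGen R x y) :
    ∃ l, IsWalk R x y l := by
  induction h with
  | refl => exact ⟨[x], isWalk_singleton x⟩
  | @tail b c hab hbc ih =>
    obtain ⟨l, hch, hh, hl⟩ := ih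
    refine ⟨l ++ [c], ?_, ?_, List.getLast?_concat (l := l)⟩
    · rw [List.Chain', List.isChain_append]
      refine ⟨hch, List.isChain_singleton c, ?_⟩
      intro u hu v hv
      simp at hv
      rw [hl] at hu
      simp at hu
      subst hu; subst hv; exact hbc
    · rw [List.head?_append_of_ne_nil _ (by rintro rfl; simp at hh)]
      exact hh

lemma reflTransGen_of_chain'_head {l : List V} (hch : l.Chain' R) {a z : V}
    (ha : l.head? = some a) (hz : z ∈ l) : ReflTransGen R a z := by
  induction l generalizing a with
  | nil => simp at hz
  | cons x t ih =>
    have hax : a = x := by simpa using ha.symm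
    subst hax
    rcases List.mem_cons.mp hz with rfl | hzt
    · exact ReflTransGen.refl
    · match t, hzt with
      | b :: t', hzt =>
        have hxb : R a b := (List.isChain_cons_cons.mp hch).1
        exact ReflTransGen.head hxb (ih (List.isChain_cons_cons.mp hch).2 rfl hzt)

lemma reflTransGen_of_chain'_last {l : List V} (hch : l.Chain' R) {b z : V}
    (hb : l.getLast? = some b) (hz : z ∈ l) : ReflTransGen R z b := by
  induction l generalizing z with
  | nil => simp at hz
  | cons x t ih =>
    match t with
    | [] =>
      simp at hb hz
      subst hb; subst hz; exact ReflTransGen.refl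
    | c :: t' =>
      have hb' : (c :: t').getLast? = some b := by
        rw [← hb]; simp [List.getLast?_cons_cons]
      rcases List.mem_cons.mp hz with rfl | hzt
      · have hxc : R z c := (List.isChain_cons_cons.mp hch).1
        exact ReflTransGen.head hxc (ih (List.isChain_cons_cons.mp hch).2 hb' (by simp))
      · exact ih (List.isChain_cons_cons.mp hch).2 hb' hzt

lemma monotone_of_reflTransGen {m : V → ℕ} (hm : ∀ u v, R u v → m u ≤ m v)
    {a b : V} (h : ReflTransGen R a b) : m a ≤ m b := by
  induction h with
  | refl => exact le_rfl
  | tail _ huv ih => exact le_trans ih (hm _ _ huv)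

private lemma exists_path_of_walk_aux :
    ∀ n (l : List V) (x y : V), l.length ≤ n → l.Chain' R → l.head? = some x →
      l.getLast? = some y → ∃ p, IsDipathFromTo R x y p ∧ ∀ z ∈ p, z ∈ l := by
  intro n
  induction n using Nat.strong_induction_on with
  | _ n ih =>
  intro l x y hn hch hh hl
  obtain ⟨t, rfl⟩ := cons_of_head? hh
  by_cases hxt : x ∈ t
  · obtain ⟨t₁, t₂, rfl⟩ := List.append_of_mem hxt
    have heq : x :: (t₁ ++ x :: t₂) = (x :: t₁) ++ (x :: t₂) := by simp
    have hch2 : (x :: t₂).Chain' R := by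
      rw [heq, List.Chain', List.isChain_append] at hch
      exact hch.2.1
    have hl2 : (x :: t₂).getLast? = some y := by
      rw [heq, List.getLast?_append_of_ne_nil _ (by simp)] at hl
      exact hl
    have hlen : (x :: t₂).length < n := by
      simp at hn ⊢
      omega
    obtain ⟨p, hp, hsub⟩ := ih _ hlen _ _ _ le_rfl hch2 rfl hl2
    exact ⟨p, hp, fun z hz => by
      have := hsub z hz
      simp at this ⊢
      tauto⟩
  · cases t with
    | nil =>
      have : y = x := by simpa using hl.symm
      subst this
      exact ⟨[y], ⟨List.isChain_singleton y, by simp, rfl, rfl⟩, by simp⟩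
    | cons b t' =>
      have hcht : (b :: t').Chain' R := (List.isChain_cons_cons.mp hch).2
      have hlt : (b :: t').getLast? = some y := by
        rw [← hl]; simp [List.getLast?_cons_cons]
      have hlen : (b :: t').length < n := by simp at hn ⊢; omega
      obtain ⟨p, ⟨hpch, hpnd, hph, hpl⟩, hsub⟩ := ih _ hlen _ _ _ le_rfl hcht rfl hlt
      obtain ⟨p', rfl⟩ := cons_of_head? hph
      refine ⟨x :: b :: p', ⟨?_, ?_, rfl, ?_⟩, ?_⟩
      · exact List.isChain_cons_cons.mpr ⟨(List.isChain_cons_cons.mp hch).1, hpch⟩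
      · refine List.nodup_cons.mpr ⟨fun hmem => hxt ?_, hpnd⟩
        exact hsub x hmem
      · rw [← hpl]; simp [List.getLast?_cons_cons]
      · intro z hz
        rcases List.mem_cons.mp hz with rfl | hz'
        · simp
        · simp [hsub z hz']

lemma exists_path_of_walk {x y : V} {l : List V} (h : IsWalk R x y l) :
    ∃ p, IsDipathFromTo R x y p ∧ ∀ z ∈ p, z ∈ l :=
  exists_path_of_walk_aux l.length l x y le_rfl h.1 h.2.1 h.2.2

lemma exists_truncated_walk {X : Set V} {a b : V} {l : List V} (h : IsWalk R a b l)
    (hb : b ∈ X) : ∃ l' x₀, IsWalk R a x₀ l' ∧ x₀ ∈ X ∧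
      (∀ z ∈ l', z ∈ X → z = x₀) ∧ ∀ z ∈ l', z ∈ l := by
  classical
  obtain ⟨hch, hh, hl⟩ := h
  induction l generalizing a with
  | nil => simp at hh
  | cons x t ih =>
    have hax : a = x := by simpa using hh.symm
    subst hax
    by_cases hxX : a ∈ X
    · exact ⟨[a], a, isWalk_singleton a, hxX, by simp, by simp⟩
    · cases t with
      | nil =>
        have : b = a := by simpa using hl.symm
        exact absurd (this ▸ hb) hxX
      | cons c t' =>
        have hlt : (c :: t').getLast? = some b := by
          rw [← hl]; simp [List.getLast?_cons_cons]
        obtain ⟨l', x₀, ⟨hch', hh', hl'⟩, hx₀, honly, hsub⟩ :=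
          ih (List.isChain_cons_cons.mp hch).2 rfl hlt
        refine ⟨a :: l', x₀, ⟨?_, rfl, ?_⟩, hx₀, ?_, ?_⟩
        · refine List.isChain_cons.mpr ⟨?_, hch'⟩
          intro y hy
          rw [hh'] at hy
          cases hy
          exact (List.isChain_cons_cons.mp hch).1
        · rw [← hl']
          exact getLast?_cons_ne (by rintro rfl; simp at hh')
        · intro z hz hzX
          rcases List.mem_cons.mp hz with rfl | hz'
          · exact absurd hzX hxX
          · exact honly z hz' hzX
        · intro z hz
          rcases List.mem_cons.mp hz with rfl | hz'
          · simp
          · simp [hsub z hz']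

lemma IsWalk.append {x v y : V} {l₁ l₂ : List V} (h₁ : IsWalk R x v l₁)
    (h₂ : IsWalk R v y l₂) : ∃ l, IsWalk R x y l ∧ ∀ z ∈ l, z ∈ l₁ ∨ z ∈ l₂ := by
  obtain ⟨hch₁, hh₁, hl₁⟩ := h₁
  obtain ⟨hch₂, hh₂, hl₂⟩ := h₂
  obtain ⟨t, rfl⟩ := cons_of_head? hh₂
  refine ⟨l₁ ++ t, ⟨?_, ?_, ?_⟩, ?_⟩
  · rw [List.Chain', List.isChain_append]
    refine ⟨hch₁, (List.isChain_cons.mp hch₂).2, ?_⟩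
    intro u hu z hz
    rw [hl₁] at hu
    cases hu
    exact (List.isChain_cons.mp hch₂).1 z hz
  · rw [List.head?_append_of_ne_nil _ (by rintro rfl; simp at hh₁)]
    exact hh₁
  · cases t with
    | nil =>
      have : y = v := by simpa using hl₂.symm
      simpa [this] using hl₁
    | cons c t' =>
      rw [List.getLast?_append_of_ne_nil _ (by simp)]
      rw [← hl₂]; simp [List.getLast?_cons_cons]
  · intro z hz
    rcases List.mem_append.mp hz with h | h
    · exact Or.inl h
    · exact Or.inr (by simp [h])

lemma chain'_induce_of_forall_mem {S : Set V} {l : List V}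
    (hmem : ∀ z ∈ l, z ∈ S) (hch : l.Chain' R) :
    l.Chain' (fun u v => u ∈ S ∧ v ∈ S ∧ R u v) := by
  induction l with
  | nil => exact List.IsChain.nil
  | cons x t ih =>
    cases t with
    | nil => exact List.IsChain.singleton x
    | cons b t' =>
      refine List.isChain_cons_cons.mpr
        ⟨⟨hmem x (by simp), hmem b (by simp), (List.isChain_cons_cons.mp hch).1⟩, ?_⟩
      exact ih (fun z hz => hmem z (by simp [hz])) (List.isChain_cons_cons.mp hch).2

end Walks

section SCC
variable {V : Type*}

open Relation

/-- The strong component of `v` inside `U`. -/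
def sccOf (A : V → V → Prop) (U : Set V) (v : V) : Set V :=
  {u | u ∈ U ∧ ReflTransGen (Induce A U) v u ∧ ReflTransGen (Induce A U) u v}

lemma sccOf_subset {A : V → V → Prop} {U : Set V} {v : V} : sccOf A U v ⊆ U :=
  fun _ h => h.1

lemma mem_sccOf_self {A : V → V → Prop} {U : Set V} {v : V} (hv : v ∈ U) :
    v ∈ sccOf A U v := ⟨hv, ReflTransGen.refl, ReflTransGen.refl⟩

lemma sccOf_eq_of_mem {A : V → V → Prop} {U : Set V} {u v : V}
    (h : u ∈ sccOf A U v) : sccOf A U u = sccOf A U v := by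
  obtain ⟨hu, hvu, huv⟩ := h
  ext z
  constructor
  · rintro ⟨hz, h1, h2⟩
    exact ⟨hz, hvu.trans h1, h2.trans huv⟩
  · rintro ⟨hz, h1, h2⟩
    exact ⟨hz, huv.trans h1, h2.trans hvu⟩

lemma mem_of_reach_induce {A : V → V → Prop} {U : Set V} {a b : V}
    (h : ReflTransGen (Induce A U) a b) (ha : a ∈ U) : b ∈ U := by
  rcases h.cases_tail with rfl | ⟨c, _, hc⟩
  · exact ha
  · exact hc.2.1

/-- The strong component of `v` induces a strongly connected subdigraph. -/
lemma stronglyConnectedOn_sccOf (A : V → V → Prop) (U : Set V) (v : V) :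
    StronglyConnectedOn A (sccOf A U v) := by
  intro x hx y hy
  set S := sccOf A U v with hS
  obtain ⟨W₁, hW₁⟩ := exists_walk_of_reflTransGen hx.2.2
  obtain ⟨W₂, hW₂⟩ := exists_walk_of_reflTransGen hy.2.1
  have hxU : x ∈ U := hx.1
  have hmem₁ : ∀ z ∈ W₁, z ∈ S := by
    intro z hz
    have hxz : ReflTransGen (Induce A U) x z := reflTransGen_of_chain'_head hW₁.1 hW₁.2.1 hz
    have hzv : ReflTransGen (Induce A U) z v := reflTransGen_of_chain'_last hW₁.1 hW₁.2.2 hz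
    exact ⟨mem_of_reach_induce hxz hxU, hx.2.1.trans hxz, hzv⟩
  have hmem₂ : ∀ z ∈ W₂, z ∈ S := by
    intro z hz
    have hvz : ReflTransGen (Induce A U) v z := reflTransGen_of_chain'_head hW₂.1 hW₂.2.1 hz
    have hzy : ReflTransGen (Induce A U) z y := reflTransGen_of_chain'_last hW₂.1 hW₂.2.2 hz
    have hvU : v ∈ U := mem_of_reach_induce hx.2.2 hxU
    exact ⟨mem_of_reach_induce hvz hvU, hvz, hzy.trans hy.2.2⟩
  obtain ⟨W, hW, hWmem⟩ := hW₁.append hW₂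
  have hmem : ∀ z ∈ W, z ∈ S := fun z hz => (hWmem z hz).elim (hmem₁ z) (hmem₂ z)
  have hch : W.Chain' (Induce A S) := by
    refine (chain'_induce_of_forall_mem hmem hW.1).imp ?_
    rintro u w ⟨huS, hwS, -, -, ha⟩
    exact ⟨huS, hwS, ha⟩
  obtain ⟨p, hp, -⟩ := exists_path_of_walk (⟨hch, hW.2.1, hW.2.2⟩ : IsWalk (Induce A S) x y W)
  exact ⟨p, hp⟩

/-- Any dicycle of a relation contained in `Induce A U` lies inside a strong component. -/
lemma dicycle_subset_sccOf {A : V → V → Prop} {U : Set V} {R : V → V → Prop}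
    (hR : ∀ u v, R u v → Induce A U u v) {l : List V} (hl : IsDicycleList R l) :
    ∃ w ∈ U, ∀ z ∈ l, z ∈ sccOf A U w := by
  obtain ⟨hlen, hch, hnd, xx, yy, hx, hy, hxy⟩ := hl
  have hch' : l.Chain' (Induce A U) := hch.imp hR
  have hwrap : Induce A U xx yy := hR _ _ hxy
  have hyU : yy ∈ U := hwrap.2.1
  refine ⟨yy, hyU, fun z hz => ?_⟩
  have h1 : ReflTransGen (Induce A U) yy z := reflTransGen_of_chain'_head hch' hy hz
  have h2 : ReflTransGen (Induce A U) z xx := reflTransGen_of_chain'_last hch' hx hz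
  have h3 : ReflTransGen (Induce A U) z yy := h2.trans (ReflTransGen.single hwrap)
  exact ⟨mem_of_reach_induce h1 hyU, h1, h3⟩

end SCC

section Coloring
variable {V : Type*} [Fintype V]

open Relation Classical in
/-- A choice of a `k`-coloring of `Induce A S` with acyclic classes, when one exists. -/
noncomputable def optColor (A : V → V → Prop) (k : ℕ) (hk : 1 ≤ k) (S : Set V) : V → Fin k :=
  if h : ∃ f : V → Fin k, ∀ i, AcyclicRel (Induce (Induce A S) {v | f v = i}) then h.choose
  else fun _ => ⟨0, hk⟩

lemma optColor_spec {A : V → V → Prop} {k : ℕ} (hk : 1 ≤ k) {S : Set V}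
    (h : dichrom (Induce A S) ≤ k) :
    ∀ i, AcyclicRel (Induce (Induce A S) {v | optColor A k hk S v = i}) := by
  have hex : ∃ f : V → Fin k, ∀ i, AcyclicRel (Induce (Induce A S) {v | f v = i}) :=
    exists_coloring_of_le h
  rw [optColor, dif_pos hex]
  exact hex.choose_spec

/-- If every strong component of `U` has dichromatic number at most `k`, so does `U`. -/
lemma dichrom_le_of_sccOf {A : V → V → Prop} {U : Set V} {k : ℕ} (hk : 1 ≤ k)
    (h : ∀ v ∈ U, dichrom (Induce A (sccOf A U v)) ≤ k) :
    dichrom (Induce A U) ≤ k := by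
  classical
  set f : V → Fin k := fun v => optColor A k hk (sccOf A U v) v with hf
  refine dichrom_le_of_coloring f (fun i => ?_)
  rintro ⟨l, hcyc⟩
  have hR : ∀ u v, Induce (Induce A U) {v | f v = i} u v → Induce A U u v := by
    rintro u v ⟨-, -, ha⟩; exact ha
  obtain ⟨w, hwU, hmem⟩ := dicycle_subset_sccOf hR hcyc
  set S := sccOf A U w with hS
  have hSw : ∀ z ∈ l, sccOf A U z = S := fun z hz => sccOf_eq_of_mem (hmem z hz)
  obtain ⟨hlen, hch, hnd, xx, yy, hx, hy, hxy⟩ := hcyc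
  have key : ∀ u v, u ∈ l → v ∈ l →
      Induce (Induce A U) {v | f v = i} u v →
      Induce (Induce A S) {v | optColor A k hk S v = i} u v := by
    rintro u v hul hvl ⟨hu, hv, -, -, ha⟩
    refine ⟨?_, ?_, hmem u hul, hmem v hvl, ha⟩
    · show optColor A k hk S u = i
      rw [← hSw u hul]; exact hu
    · show optColor A k hk S v = i
      rw [← hSw v hvl]; exact hv
  refine optColor_spec hk (h w hwU) i ⟨l, hlen, ?_, hnd, xx, yy, hx, hy, ?_⟩
  · refine (chain'_induce_of_forall_mem (S := {z | z ∈ l}) (fun z hz => hz) hch).imp ?_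
    rintro u v ⟨hul, hvl, harc⟩
    exact key u v hul hvl harc
  · have hxl : xx ∈ l := List.mem_of_mem_getLast? (Option.mem_def.mpr hx)
    have hyl : yy ∈ l := List.mem_of_mem_head? (Option.mem_def.mpr hy)
    exact key xx yy hxl hyl hxy

end Coloring

section Levels
variable {V : Type*} [Fintype V]

open Relation

omit [Fintype V] in
lemma ddist_realized {A : V → V → Prop} {C : Set V} (hC : StronglyConnectedOn A C)
    {r : V} (hr : r ∈ C) {v : V} (hv : v ∈ C) :
    ∃ l, IsDipathFromTo (Induce A C) v r l ∧ l.length = ddist (Induce A C) v r + 1 := by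
  have hne : {n | ∃ l, IsDipathFromTo (Induce A C) v r l ∧ l.length = n + 1}.Nonempty := by
    obtain ⟨l, hl⟩ := hC v hv r hr
    obtain ⟨t, rfl⟩ := cons_of_head? hl.2.2.1
    exact ⟨t.length, (v :: t), hl, by simp⟩
  exact Nat.sInf_mem hne

omit [Fintype V] in
lemma ddist_le_of_suffix {A : V → V → Prop} {C : Set V} {r u s : V} {l₁ l₂ : List V}
    (h : IsDipathFromTo (Induce A C) s r (l₁ ++ u :: l₂)) :
    ddist (Induce A C) u r ≤ l₂.length := by
  obtain ⟨hch, hnd, hh, hl⟩ := h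
  refine Nat.sInf_le ⟨u :: l₂, ⟨?_, ?_, rfl, ?_⟩, by simp⟩
  · exact (List.isChain_append.mp hch).2.1
  · exact List.Nodup.sublist (List.sublist_append_right l₁ _) hnd
  · rw [← hl, List.getLast?_append_of_ne_nil _ (by simp)]

omit [Fintype V] in
lemma ddist_arc {A : V → V → Prop} {C : Set V} (hC : StronglyConnectedOn A C)
    {r : V} (hr : r ∈ C) {u v : V} (ha : Induce A C u v) :
    ddist (Induce A C) u r ≤ ddist (Induce A C) v r + 1 := by
  classical
  obtain ⟨huC, hvC, hA⟩ := ha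
  obtain ⟨l, hl, hlen⟩ := ddist_realized hC hr hvC
  by_cases hu : u ∈ l
  · obtain ⟨l₁, l₂, rfl⟩ := List.append_of_mem hu
    have := ddist_le_of_suffix (r := r) hl
    have hlen2 : l₂.length ≤ ddist (Induce A C) v r := by
      have : (l₁ ++ u :: l₂).length = ddist (Induce A C) v r + 1 := hlen
      simp at this
      omega
    omega
  · obtain ⟨hch, hnd, hh, hlast⟩ := hl
    obtain ⟨t, rfl⟩ := cons_of_head? hh
    have : ddist (Induce A C) u r ≤ (v :: t).length := by
      refine Nat.sInf_le ⟨u :: v :: t, ⟨?_, ?_, rfl, ?_⟩, by simp⟩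
      · exact List.isChain_cons_cons.mpr ⟨⟨huC, hvC, hA⟩, hch⟩
      · exact List.nodup_cons.mpr ⟨hu, hnd⟩
      · rw [← hlast]; exact getLast?_cons_ne (by simp)
    simp at this hlen
    omega

lemma ddist_lt_card {A : V → V → Prop} {C : Set V} (hC : StronglyConnectedOn A C)
    {r : V} (hr : r ∈ C) {v : V} (hv : v ∈ C) :
    ddist (Induce A C) v r < Fintype.card V := by
  obtain ⟨l, hl, hlen⟩ := ddist_realized hC hr hv
  have := List.Nodup.length_le_card hl.2.1
  omega

lemma level_coloring {A : V → V → Prop} {C : Set V} (hC : StronglyConnectedOn A C)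
    {r : V} (hr : r ∈ C) {k : ℕ} (hk : 1 ≤ k)
    (h : ∀ j, dichrom (Induce A {v | v ∈ C ∧ ddist (Induce A C) v r = j}) ≤ k) :
    dichrom (Induce A C) ≤ 2 * k := by
  classical
  set d : V → ℕ := fun v => ddist (Induce A C) v r with hd
  set Lev : ℕ → Set V := fun j => {v | v ∈ C ∧ d v = j} with hLev
  set f : V → Fin 2 × Fin k :=
    fun v => (⟨d v % 2, Nat.mod_lt _ (by omega)⟩, optColor A k hk (Lev (d v)) v) with hf
  have hcard : (2 : ℕ) * k = Fintype.card (Fin 2 × Fin k) := by simp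
  rw [hcard]
  refine dichrom_le_card_of_coloring f (fun i => ?_)
  rintro ⟨l, hcyc⟩
  have hR : ∀ u v, Induce (Induce A C) {v | f v = i} u v → Induce A C u v := by
    rintro u v ⟨-, -, ha⟩; exact ha
  obtain ⟨w, hwC, hmem⟩ := dicycle_subset_sccOf hR hcyc
  have hmemC : ∀ z ∈ l, z ∈ C := fun z hz => sccOf_subset (hmem z hz)
  obtain ⟨hlen, hch, hnd, xx, yy, hx, hy, hxy⟩ := hcyc
  -- d is monotone along arcs of the cycle relation
  have hmono : ∀ u v, Induce (Induce A C) {v | f v = i} u v → d u ≤ d v := by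
    rintro u v ⟨hu, hv, harc⟩
    have h1 : d u ≤ d v + 1 := ddist_arc hC hr harc
    have hpar : d u % 2 = d v % 2 := by
      have : f u = f v := hu.trans hv.symm
      have := congrArg (fun p => (p.1 : Fin 2).val) this
      simpa using this
    omega
  have hxl : xx ∈ l := List.mem_of_mem_getLast? (Option.mem_def.mpr hx)
  have hyl : yy ∈ l := List.mem_of_mem_head? (Option.mem_def.mpr hy)
  have hconst : ∀ z ∈ l, d z = d yy := by
    intro z hz
    have h1 : d yy ≤ d z := monotone_of_reflTransGen hmono
      (reflTransGen_of_chain'_head hch hy hz)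
    have h2 : d z ≤ d xx := monotone_of_reflTransGen hmono
      (reflTransGen_of_chain'_last hch hx hz)
    have h3 : d xx ≤ d yy := hmono _ _ hxy
    omega
  set j := d yy with hj
  have hmemL : ∀ z ∈ l, z ∈ Lev j := fun z hz => ⟨hmemC z hz, hconst z hz⟩
  have key : ∀ u v, u ∈ l → v ∈ l →
      Induce (Induce A C) {v | f v = i} u v →
      Induce (Induce A (Lev j)) {v | optColor A k hk (Lev j) v = i.2} u v := by
    rintro u v hul hvl ⟨hu, hv, -, -, ha⟩
    refine ⟨?_, ?_, hmemL u hul, hmemL v hvl, ha⟩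
    · show optColor A k hk (Lev j) u = i.2
      have : optColor A k hk (Lev (d u)) u = i.2 := congrArg Prod.snd hu
      rwa [hconst u hul] at this
    · show optColor A k hk (Lev j) v = i.2
      have : optColor A k hk (Lev (d v)) v = i.2 := congrArg Prod.snd hv
      rwa [hconst v hvl] at this
  refine optColor_spec hk (h j) i.2 ⟨l, hlen, ?_, hnd, xx, yy, hx, hy, key xx yy hxl hyl hxy⟩
  refine (chain'_induce_of_forall_mem (S := {z | z ∈ l}) (fun z hz => hz) hch).imp ?_
  rintro u v ⟨hul, hvl, harc⟩
  exact key u v hul hvl harc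

end Levels

/-- Every digraph contains a strongly connected induced subdigraph of at least half its
dichromatic number, with a vertex `x₀` reachable from every vertex of it by a path
meeting the set exactly in its endpoints. -/
theorem stmt_3 {V : Type*} [Fintype V] [Nonempty V] (A : V → V → Prop) :
    ∃ (X : Set V) (x₀ : V), x₀ ∈ X ∧ StronglyConnectedOn A X ∧
      dichrom A ≤ 2 * dichrom (Induce A X) ∧
      ∀ x ∈ X, ∃ l, IsDipathFromTo A x x₀ l ∧ ∀ z ∈ l, z ∈ X → z = x ∨ z = x₀ := by
  classical
  by_cases hsmall : dichrom A ≤ 2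
  · -- trivial construction: a singleton
    set x : V := Classical.arbitrary V
    refine ⟨{x}, x, rfl, ?_, ?_, ?_⟩
    · intro a ha b hb
      rcases ha with rfl
      rcases hb with rfl
      exact ⟨[x], List.isChain_singleton x, by simp, rfl, rfl⟩
    · have h1 : 1 ≤ dichrom (Induce A {x}) := dichrom_pos _
      omega
    · intro z hz
      rcases hz with rfl
      exact ⟨[x], ⟨List.isChain_singleton x, by simp, rfl, rfl⟩, fun w hw _ => by
        simp at hw; exact Or.inl hw⟩
  · have hbig : 3 ≤ dichrom A := by omega
    -- Step 1: a strong component of maximal dichromatic number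
    obtain ⟨r, -, hrmax⟩ := Finset.exists_max_image Finset.univ
      (fun v => dichrom (Induce A (sccOf A Set.univ v))) Finset.univ_nonempty
    set C : Set V := sccOf A Set.univ r with hCdef
    have hCstrong : StronglyConnectedOn A C := stronglyConnectedOn_sccOf A Set.univ r
    have hrC : r ∈ C := mem_sccOf_self (Set.mem_univ r)
    have hAC : dichrom A ≤ dichrom (Induce A C) := by
      have := dichrom_le_of_sccOf (A := A) (U := Set.univ) (dichrom_pos _)
        (fun v _ => hrmax v (Finset.mem_univ v))
      rwa [induce_univ] at this
    -- Step 2: levels by distance to r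
    set Lev : ℕ → Set V := fun j => {v | v ∈ C ∧ ddist (Induce A C) v r = j} with hLevdef
    set k₁ : ℕ := Finset.sup (Finset.range (Fintype.card V))
      (fun j => dichrom (Induce A (Lev j))) with hk₁def
    have hcardpos : 0 < Fintype.card V := Fintype.card_pos
    have hk₁pos : 1 ≤ k₁ := by
      refine le_trans (dichrom_pos (Induce A (Lev 0))) ?_
      rw [hk₁def]
      exact Finset.le_sup (f := fun j => dichrom (Induce A (Lev j))) (Finset.mem_range.mpr hcardpos)
    have hall : ∀ j, dichrom (Induce A (Lev j)) ≤ k₁ := by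
      intro j
      by_cases hj : j < Fintype.card V
      · rw [hk₁def]
        exact Finset.le_sup (f := fun j => dichrom (Induce A (Lev j))) (Finset.mem_range.mpr hj)
      · have : Lev j = ∅ := by
          ext v
          simp only [hLevdef, Set.mem_setOf_eq, Set.mem_empty_iff_false, iff_false]
          rintro ⟨hvC, hvd⟩
          exact hj (hvd ▸ ddist_lt_card hCstrong hrC hvC)
        exact le_trans (dichrom_empty_le this) hk₁pos
    have hlev : dichrom (Induce A C) ≤ 2 * k₁ := level_coloring hCstrong hrC hk₁pos hall
    obtain ⟨j, -, hjsup⟩ := Finset.exists_mem_eq_sup (Finset.range (Fintype.card V))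
      (Finset.nonempty_range_iff.mpr (by omega)) (fun j => dichrom (Induce A (Lev j)))
    set L : Set V := Lev j with hLdef
    have hkL : k₁ = dichrom (Induce A L) := hjsup
    have hk₁2 : 2 ≤ k₁ := by omega
    have hLne : L.Nonempty := by
      rw [Set.nonempty_iff_ne_empty]
      intro h
      have := dichrom_empty_le (A := A) h
      omega
    obtain ⟨v₂, hv₂L⟩ := hLne
    -- Step 3: a strong component of the level of maximal dichromatic number
    set s : Finset V := Finset.univ.filter (· ∈ L) with hsdef
    have hv₂s : v₂ ∈ s := by simp [hsdef, hv₂L]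
    obtain ⟨v₃, hv₃s, hv₃max⟩ := Finset.exists_max_image s
      (fun v => dichrom (Induce A (sccOf A L v))) ⟨v₂, hv₂s⟩
    have hv₃L : v₃ ∈ L := by simpa [hsdef] using hv₃s
    set X : Set V := sccOf A L v₃ with hXdef
    have hLX : dichrom (Induce A L) ≤ dichrom (Induce A X) := by
      refine dichrom_le_of_sccOf (dichrom_pos _) (fun v hv => ?_)
      exact hv₃max v (by simp [hsdef, hv])
    have hXstrong : StronglyConnectedOn A X := stronglyConnectedOn_sccOf A L v₃
    have hv₃X : v₃ ∈ X := mem_sccOf_self hv₃L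
    have hXsubL : X ⊆ L := sccOf_subset
    have hLsubC : L ⊆ C := fun v hv => hv.1
    -- Step 4: the vertex x₀
    obtain ⟨Q₀, hQ₀⟩ := hCstrong r hrC v₃ (hLsubC hv₃L)
    obtain ⟨Q, x₀, hQwalk, hx₀X, hQonly, -⟩ :=
      exists_truncated_walk ⟨hQ₀.1, hQ₀.2.2.1, hQ₀.2.2.2⟩ hv₃X
    refine ⟨X, x₀, hx₀X, hXstrong, ?_, ?_⟩
    · calc dichrom A ≤ 2 * k₁ := le_trans hAC hlev
        _ ≤ 2 * dichrom (Induce A X) := by omega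
    -- Step 5: the paths
    intro x hxX
    have hxL : x ∈ L := hXsubL hxX
    have hxC : x ∈ C := hLsubC hxL
    obtain ⟨P, hP, hPlen⟩ := ddist_realized hCstrong hrC hxC
    have hPwalkA : IsWalk A x r P :=
      ⟨hP.1.imp (fun u v h => h.2.2), hP.2.2.1, hP.2.2.2⟩
    have hQwalkA : IsWalk A r x₀ Q :=
      ⟨hQwalk.1.imp (fun u v h => h.2.2), hQwalk.2.1, hQwalk.2.2⟩
    obtain ⟨W, hW, hWmem⟩ := hPwalkA.append hQwalkA
    obtain ⟨p, hp, hpsub⟩ := exists_path_of_walk hW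
    refine ⟨p, hp, fun z hzp hzX => ?_⟩
    rcases hWmem z (hpsub z hzp) with hzP | hzQ
    · -- z on the shortest path P: must be x
      left
      by_contra hzx
      obtain ⟨t, rfl⟩ := cons_of_head? hP.2.2.1
      have hzt : z ∈ t := by
        rcases List.mem_cons.mp hzP with rfl | h
        · exact absurd rfl hzx
        · exact h
      obtain ⟨t₁, t₂, rfl⟩ := List.append_of_mem hzt
      have hshape : x :: (t₁ ++ z :: t₂) = (x :: t₁) ++ z :: t₂ := by simp
      have hdz : ddist (Induce A C) z r ≤ t₂.length :=
        ddist_le_of_suffix (s := x) (hshape ▸ hP)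
      have hdzj : ddist (Induce A C) z r = j := (hXsubL hzX).2
      have hdxj : ddist (Induce A C) x r = j := hxL.2
      have : (x :: (t₁ ++ z :: t₂)).length = ddist (Induce A C) x r + 1 := hPlen
      simp at this
      omega
    · exact Or.inr (hQonly z hzQ hzX)
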